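/- arXiv:2605.18509 — 3 statements merged into one kernel-verified Lean document; each statement's English description precedes it below -/
import Mathlib

section
/- Fix a context x. Assume Local Linearity holds at x (there exists φ_x ∈ ℝ^K with q(x,a) = ⟨I_a, φ_x⟩ for all a ∈ A). Let φ* ∈ ℝ^K be any vector satisfying Γ_{π0,x} φ* = θ_{π0,x}. Then q(x,a) = ⟨I_a, φ*⟩ for every a ∈ A with π0(a|x) > 0. -/
open Matrix BigOperators Finset

noncomputable section

/-- The combination of the first `s` coordinates of an action. -/
def combo {d s : ℕ} {F : Fin d → Type} (hsd : s ≤ d) (a : ∀ l, F l) :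
    ∀ j : Fin s, F (Fin.castLE hsd j) :=
  fun j => a (Fin.castLE hsd j)

/-- The index set of the one-hot embedding: one coordinate for each value of each feature
dimension, plus one coordinate for each combination of the first `s` dimensions. -/
abbrev FeatIdx {d : ℕ} (F : Fin d → Type) {s : ℕ} (hsd : s ≤ d) : Type _ :=
  (Σ l : Fin d, F l) ⊕ (∀ j : Fin s, F (Fin.castLE hsd j))

/-- The one-hot embedding `I_a`: concatenation of the one-hot indicators of
`f_1(a), …, f_d(a)` and of `f_{1:s}(a)`. -/
def oneHot {d s : ℕ} {F : Fin d → Type} [∀ l, DecidableEq (F l)] (hsd : s ≤ d)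
    (a : ∀ l, F l) : FeatIdx F hsd → ℝ :=
  fun i =>
    match i with
    | Sum.inl ⟨l, f⟩ => if a l = f then 1 else 0
    | Sum.inr c => if combo hsd a = c then 1 else 0

/-- under Local Linearity at `x`, any `φ*` with `Γ_{π0,x} φ* = θ_{π0,x}`
recovers `q(x,a) = ⟨I_a, φ*⟩` for every action in the support of `π0(·|x)`. -/
theorem identification_on_support {X : Type*} [Fintype X] [Nonempty X]
    {d s : ℕ} (hd : 1 ≤ d) (hs1 : 1 ≤ s) (hsd : s ≤ d)
    {F : Fin d → Type} [∀ l, Fintype (F l)] [∀ l, DecidableEq (F l)] [∀ l, Nonempty (F l)]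
    (π0 : X → (∀ l, F l) → ℝ)
    (hπ0 : ∀ x, (∀ a, 0 ≤ π0 x a) ∧ ∑ a, π0 x a = 1)
    (q : X → (∀ l, F l) → ℝ) (x : X)
    (Γ : Matrix (FeatIdx F hsd) (FeatIdx F hsd) ℝ)
    (hΓ : Γ = ∑ a, π0 x a • vecMulVec (oneHot hsd a) (oneHot hsd a))
    (θ : FeatIdx F hsd → ℝ)
    (hθ : θ = ∑ a, (π0 x a * q x a) • oneHot hsd a)
    (hlin : ∃ φx : FeatIdx F hsd → ℝ, ∀ a, q x a = oneHot hsd a ⬝ᵥ φx)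
    (φst : FeatIdx F hsd → ℝ) (hφst : Γ.mulVec φst = θ) :
    ∀ a, 0 < π0 x a → q x a = oneHot hsd a ⬝ᵥ φst := by
  obtain ⟨φx, hφx⟩ := hlin
  have h1 : ∀ w : FeatIdx F hsd → ℝ,
      Γ.mulVec w = ∑ a, (π0 x a * (oneHot hsd a ⬝ᵥ w)) • oneHot hsd a := by
    intro w
    ext i
    rw [hΓ]
    simp only [mulVec, dotProduct, Matrix.sum_apply, Matrix.smul_apply, vecMulVec_apply,
      smul_eq_mul, Finset.sum_apply, Pi.smul_apply, Finset.sum_mul]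
    rw [Finset.sum_comm]
    refine Finset.sum_congr rfl fun a _ => ?_
    simp only [Finset.mul_sum, Finset.sum_mul]
    exact Finset.sum_congr rfl fun j _ => by ring
  have hΓφx : Γ.mulVec φx = θ := by
    rw [h1, hθ]
    exact Finset.sum_congr rfl fun a _ => by rw [hφx a]
  set e : FeatIdx F hsd → ℝ := φx - φst with he
  have hΓe : Γ.mulVec e = 0 := by
    rw [he, mulVec_sub, hΓφx, hφst, sub_self]
  have hquad : ∑ a, π0 x a * (oneHot hsd a ⬝ᵥ e) * (oneHot hsd a ⬝ᵥ e) = 0 := by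
    have : e ⬝ᵥ Γ.mulVec e = 0 := by rw [hΓe, dotProduct_zero]
    rw [h1 e] at this
    have dps : ∀ g : (∀ l, F l) → (FeatIdx F hsd → ℝ),
        e ⬝ᵥ (∑ a, g a) = ∑ a, e ⬝ᵥ g a := by
      intro g
      simp only [dotProduct, Finset.sum_apply, Finset.mul_sum]
      exact Finset.sum_comm ..
    rw [dps] at this
    rw [← this]
    refine Finset.sum_congr rfl fun a _ => ?_
    rw [dotProduct_smul, smul_eq_mul, dotProduct_comm]
    try ring
  have hterm : ∀ a ∈ (Finset.univ : Finset (∀ l, F l)),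
      π0 x a * (oneHot hsd a ⬝ᵥ e) * (oneHot hsd a ⬝ᵥ e) = 0 := by
    have hnn : ∀ a ∈ (Finset.univ : Finset (∀ l, F l)),
        0 ≤ π0 x a * (oneHot hsd a ⬝ᵥ e) * (oneHot hsd a ⬝ᵥ e) := fun a _ => by
      rw [mul_assoc]
      exact mul_nonneg ((hπ0 x).1 a) (mul_self_nonneg _)
    exact (Finset.sum_eq_zero_iff_of_nonneg hnn).mp hquad
  intro a ha
  have h0 := hterm a (Finset.mem_univ a)
  have hde : oneHot hsd a ⬝ᵥ e = 0 := by
    rcases mul_eq_zero.mp h0 with h | h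
    · rcases mul_eq_zero.mp h with h' | h'
      · exact absurd h' (ne_of_gt ha)
      · exact h'
    · exact h
  have hsub : oneHot hsd a ⬝ᵥ φx - oneHot hsd a ⬝ᵥ φst = 0 := by
    rw [← dotProduct_sub]; exact hde
  rw [hφx a]; linarith
end
end

section
/- Fix a context x. Assume Local Linearity holds at x (there exists φ_x ∈ ℝ^K with q(x,a) = ⟨I_a, φ_x⟩ for all a ∈ A). Let φ* ∈ ℝ^K be any vector satisfying Γ_{π0,x} φ* = θ_{π0,x}. Then for every action a ∈ A such that I_a is orthogonal to the kernel of Γ_{π0,x}, one has q(x,a) = ⟨I_a, φ*⟩ — even if π0(a|x) = 0, i.e., even for actions never chosen by the logging policy at x. -/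
open Matrix BigOperators Finset

noncomputable section

/-- under Local Linearity at `x`, any `φ*` with `Γ_{π0,x} φ* = θ_{π0,x}`
recovers `q(x,a) = ⟨I_a, φ*⟩` for every action `a` whose embedding `I_a` is orthogonal
to the kernel of `Γ_{π0,x}` — even if `π0(a|x) = 0`. -/
theorem identification_beyond_support {X : Type*} [Fintype X] [Nonempty X]
    {d s : ℕ} (hd : 1 ≤ d) (hs1 : 1 ≤ s) (hsd : s ≤ d)
    {F : Fin d → Type} [∀ l, Fintype (F l)] [∀ l, DecidableEq (F l)] [∀ l, Nonempty (F l)]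
    (π0 : X → (∀ l, F l) → ℝ)
    (hπ0 : ∀ x, (∀ a, 0 ≤ π0 x a) ∧ ∑ a, π0 x a = 1)
    (q : X → (∀ l, F l) → ℝ) (x : X)
    (Γ : Matrix (FeatIdx F hsd) (FeatIdx F hsd) ℝ)
    (hΓ : Γ = ∑ a, π0 x a • vecMulVec (oneHot hsd a) (oneHot hsd a))
    (θ : FeatIdx F hsd → ℝ)
    (hθ : θ = ∑ a, (π0 x a * q x a) • oneHot hsd a)
    (hlin : ∃ φx : FeatIdx F hsd → ℝ, ∀ a, q x a = oneHot hsd a ⬝ᵥ φx)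
    (φst : FeatIdx F hsd → ℝ) (hφst : Γ.mulVec φst = θ) :
    ∀ a : ∀ l, F l,
      (∀ u : FeatIdx F hsd → ℝ, Γ.mulVec u = 0 → oneHot hsd a ⬝ᵥ u = 0) →
      q x a = oneHot hsd a ⬝ᵥ φst := by
  intro a ha
  obtain ⟨φx, hφx⟩ := hlin
  have hΓφx : Γ.mulVec φx = θ := by
    subst hΓ hθ
    ext i
    simp only [mulVec, dotProduct, Matrix.sum_apply, Pi.smul_apply, vecMulVec_apply,
      Matrix.smul_apply, Finset.sum_apply, smul_eq_mul, Finset.sum_mul]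
    rw [Finset.sum_comm]
    refine Finset.sum_congr rfl fun b _ => ?_
    simp only [hφx b, dotProduct]
    ring_nf
    rw [Finset.mul_sum]
    refine Finset.sum_congr rfl fun j _ => ?_
    ring
  have hker : Γ.mulVec (φst - φx) = 0 := by
    rw [Matrix.mulVec_sub, hφst, hΓφx, sub_self]
  have := ha _ hker
  rw [dotProduct_sub] at this
  rw [hφx a]
  linarith
end
end

section
/- (Unbiasedness of the DR policy-gradient estimator under Full Support.) Let π0 (logging) and π (target) be policies with π0(a|x) > 0 for all x ∈ X and a ∈ A (Full Support), let q̂ : X × A → ℝ be an arbitrary reward model, let P ≥ 1 and let g : X × A → ℝ^P be arbitrary. Then Σ_{x∈X} p(x) [ Σ_{a∈A} π0(a|x) · (π(a|x)/π0(a|x)) · (q(x,a) − q̂(x,a)) · g(x,a) + Σ_{a∈A} π(a|x) · q̂(x,a) · g(x,a) ] = Σ_{x∈X} p(x) Σ_{a∈A} π(a|x) q(x,a) g(x,a); i.e., the expected value of the single-sample Doubly Robust policy-gradient estimator equals the true policy gradient for every choice of q̂. -/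
open BigOperators

/-- Unbiasedness of the DR policy-gradient estimator under Full Support. -/
theorem dr_unbiased {X A : Type*} [Fintype X] [Nonempty X] [Fintype A] [Nonempty A]
    {P : ℕ} (hP : 1 ≤ P)
    (p : X → ℝ) (hp : (∀ x, 0 ≤ p x) ∧ ∑ x, p x = 1)
    (π0 π : X → A → ℝ)
    (hπ0 : ∀ x, (∀ a, 0 ≤ π0 x a) ∧ ∑ a, π0 x a = 1)
    (hπ : ∀ x, (∀ a, 0 ≤ π x a) ∧ ∑ a, π x a = 1)
    (hfull : ∀ x a, 0 < π0 x a)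
    (q qhat : X → A → ℝ) (g : X → A → Fin P → ℝ) :
    (∑ x, p x • ((∑ a, (π0 x a * (π x a / π0 x a) * (q x a - qhat x a)) • g x a)
        + ∑ a, (π x a * qhat x a) • g x a))
      = ∑ x, ∑ a, (p x * (π x a * q x a)) • g x a := by
  apply Finset.sum_congr rfl
  intro x _
  rw [smul_add, Finset.smul_sum, Finset.smul_sum, ← Finset.sum_add_distrib]
  apply Finset.sum_congr rfl
  intro a _
  have h0 : π0 x a * (π x a / π0 x a) = π x a := by
    rw [mul_comm, div_mul_cancel₀ _ (hfull x a).ne']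
  rw [h0, ← smul_assoc, ← smul_assoc, ← add_smul]
  congr 1
  simp [smul_eq_mul]
  ring
end
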